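/- For every n > 3, every 2-AND-OR-BN F on n nodes, and every observation set S with |S| = 1, F is not observable with S (there is no 2-AND-OR-BN with more than 3 nodes that is observable with a single observation node). -/
import Mathlib


/-- `F` is observable with observation set `S` if the map from an initial state to its
output sequence (the restriction of each iterate to `S`) is injective. -/
def observable {n : ℕ} (F : (Fin n → Bool) → (Fin n → Bool)) (S : Finset (Fin n)) : Prop :=
  Function.Injective (fun (x : Fin n → Bool) => fun (t : ℕ) (i : S) => (F^[t] x) i.val)

/-- `F` is a `K`-AND-OR-BN: each local function is the AND or the OR of `K` literals
on pairwise distinct variables (a literal is `x_{i_j} XOR b_j`). -/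
def isAndOrBN {n : ℕ} (K : ℕ) (F : (Fin n → Bool) → (Fin n → Bool)) : Prop :=
  ∀ i : Fin n, ∃ idx : Fin K → Fin n, Function.Injective idx ∧ ∃ b : Fin K → Bool,
    (∀ x, F x i = Finset.univ.inf (fun j => Bool.xor (x (idx j)) (b j))) ∨
    (∀ x, F x i = Finset.univ.sup (fun j => Bool.xor (x (idx j)) (b j)))



def ev (t e1 e2 u v : Bool) : Bool :=
  cond t ((u ^^ e1) && (v ^^ e2)) ((u ^^ e1) || (v ^^ e2))

lemma ev_swap : ∀ t e1 e2 u v, ev t e1 e2 u v = ev t e2 e1 v u := by decide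

lemma ev_tr : ∀ t a b d1 d2 u v : Bool,
    ev t a b (Bool.xor u d1) (Bool.xor v d2) = ev t (d1 ^^ a) (d2 ^^ b) u v := by decide

lemma PA : ∀ t1 a1 b1 t2 a2 b2 : Bool, ∃ u v u' v' : Bool,
    ¬(u = u' ∧ v = v') ∧ ev t1 a1 b1 u v = ev t1 a1 b1 u' v' ∧
      ev t2 a2 b2 u v = ev t2 a2 b2 u' v' := by decide

set_option maxHeartbeats 1000000 in
lemma PB0 : ∀ t1 t2 a2 b2 t3 a3 t4 a4 b4 : Bool,
    ∃ u1 u2 u3 w1 w2 w3 : Bool,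
      ¬(u1 = w1 ∧ u2 = w2 ∧ u3 = w3) ∧
      ev t1 false false u1 u2 = ev t1 false false w1 w2 ∧
      ev t2 a2 b2 u1 u2 = ev t2 a2 b2 w1 w2 ∧
      ev t3 a3 false u2 u3 = ev t3 a3 false w2 w3 ∧
      ev t4 a4 b4 u2 u3 = ev t4 a4 b4 w2 w3 := by decide

lemma xor_inj : ∀ x y d : Bool, (x ^^ d) = (y ^^ d) ↔ x = y := by decide

lemma PB : ∀ t1 a1 b1 t2 a2 b2 t3 a3 b3 t4 a4 b4 : Bool,
    ∃ u1 u2 u3 w1 w2 w3 : Bool,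
      ¬(u1 = w1 ∧ u2 = w2 ∧ u3 = w3) ∧
      ev t1 a1 b1 u1 u2 = ev t1 a1 b1 w1 w2 ∧
      ev t2 a2 b2 u1 u2 = ev t2 a2 b2 w1 w2 ∧
      ev t3 a3 b3 u2 u3 = ev t3 a3 b3 w2 w3 ∧
      ev t4 a4 b4 u2 u3 = ev t4 a4 b4 w2 w3 := by
  intro t1 a1 b1 t2 a2 b2 t3 a3 b3 t4 a4 b4
  obtain ⟨u1, u2, u3, w1, w2, w3, hne, h1, h2, h3, h4⟩ :=
    PB0 t1 t2 (a1 ^^ a2) (b1 ^^ b2) t3 (b1 ^^ a3) t4 (b1 ^^ a4) (b3 ^^ b4)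
  refine ⟨u1 ^^ a1, u2 ^^ b1, u3 ^^ b3, w1 ^^ a1, w2 ^^ b1, w3 ^^ b3, ?_, ?_, ?_, ?_, ?_⟩
  · simpa only [xor_inj] using hne
  · rw [ev_tr, ev_tr]; simpa only [Bool.xor_self] using h1
  · rw [ev_tr, ev_tr]; exact h2
  · rw [ev_tr, ev_tr]; simpa only [Bool.xor_self] using h3
  · rw [ev_tr, ev_tr]; exact h4

lemma bool_inf : ∀ u v : Bool, u ⊓ v = (u && v) := by decide
lemma bool_sup : ∀ u v : Bool, u ⊔ v = (u || v) := by decide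

section BN

variable {n : ℕ} {F : (Fin n → Bool) → (Fin n → Bool)}
  {A B : Fin n → Fin n} {sa sb ty : Fin n → Bool}

def touches (A B : Fin n → Fin n) (i v : Fin n) : Prop := A i = v ∨ B i = v

instance (A B : Fin n → Fin n) (i v : Fin n) : Decidable (touches A B i v) := by
  unfold touches; infer_instance

def otherOf (A B : Fin n → Fin n) (i v : Fin n) : Fin n := if A i = v then B i else A i

def dmd (A : Fin n → Fin n) (sa sb ty : Fin n → Bool) (i m : Fin n) : Bool :=
  if A i = m then cond (ty i) (sa i) (!(sa i)) else cond (ty i) (sb i) (!(sb i))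

def deg (A B : Fin n → Fin n) (v : Fin n) : ℕ :=
  (Finset.univ.filter (fun i => touches A B i v)).card

lemma otherOf_touches (i v : Fin n) : touches A B i (otherOf A B i v) := by
  unfold touches otherOf; split
  · right; rfl
  · left; rfl

lemma otherOf_ne {i v : Fin n} (hne : A i ≠ B i) (ht : touches A B i v) :
    otherOf A B i v ≠ v := by
  unfold otherOf; split
  · rename_i h; intro hb; exact hne (h.trans hb.symm)
  · rename_i h; rcases ht with h' | h'
    · exact absurd h' h
    · exact fun hh => h hh

lemma otherOf_other {i v : Fin n} (hne : A i ≠ B i) (ht : touches A B i v) :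
    otherOf A B i (otherOf A B i v) = v := by
  rcases ht with h | h
  · have hin : otherOf A B i v = B i := by rw [otherOf, if_pos h]
    rw [hin, otherOf, if_neg hne]; exact h
  · by_cases hA : A i = v
    · have hin : otherOf A B i v = B i := by rw [otherOf, if_pos hA]
      rw [hin, otherOf, if_neg hne]; exact hA
    · have hin : otherOf A B i v = A i := by rw [otherOf, if_neg hA]
      rw [hin, otherOf, if_pos rfl]; exact h

lemma touches3 {i u v w : Fin n} (h1 : touches A B i u) (h2 : touches A B i v)
    (h3 : touches A B i w) (huv : u ≠ v) (huw : u ≠ w) (hvw : v ≠ w) : False := by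
  rcases h1 with h1 | h1 <;> rcases h2 with h2 | h2 <;> rcases h3 with h3 | h3 <;>
    first
      | exact huv (h1.symm.trans h2)
      | exact huw (h1.symm.trans h3)
      | exact hvw (h2.symm.trans h3)

lemma force (heval : ∀ i x, F x i = ev (ty i) (sa i) (sb i) (x (A i)) (x (B i)))
    (i : Fin n) (x : Fin n → Bool) (m : Fin n) (ht : touches A B i m)
    (hx : x m = dmd A sa sb ty i m) : F x i = cond (ty i) false true := by
  rw [heval]; unfold dmd at hx
  by_cases hA : A i = m
  · rw [if_pos hA] at hx; rw [hA, hx]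
    cases hty : ty i <;> cases hsa : sa i <;> simp [ev, hty, hsa]
  · have hB : B i = m := ht.resolve_left hA
    rw [if_neg hA] at hx; rw [hB, hx]
    cases hty : ty i <;> cases hsb : sb i <;> simp [ev, hty, hsb]

lemma evalDepends (heval : ∀ i x, F x i = ev (ty i) (sa i) (sb i) (x (A i)) (x (B i)))
    (i : Fin n) {x y : Fin n → Bool} (hA : x (A i) = y (A i)) (hB : x (B i) = y (B i)) :
    F x i = F y i := by rw [heval, heval, hA, hB]

lemma norm (heval : ∀ i x, F x i = ev (ty i) (sa i) (sb i) (x (A i)) (x (B i)))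
    (hne : ∀ i, A i ≠ B i) {i a b : Fin n} (ht : touches A B i a)
    (ho : otherOf A B i a = b) : ∃ t e1 e2, ∀ x, F x i = ev t e1 e2 (x a) (x b) := by
  unfold otherOf at ho
  by_cases hA : A i = a
  · rw [if_pos hA] at ho
    exact ⟨ty i, sa i, sb i, fun x => by rw [heval, hA, ho]⟩
  · have hB : B i = a := ht.resolve_left hA
    rw [if_neg hA] at ho
    exact ⟨ty i, sb i, sa i, fun x => by rw [heval, hB, ho, ev_swap]⟩

end BN

section BN2

variable {n : ℕ} {F : (Fin n → Bool) → (Fin n → Bool)}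
  {A B : Fin n → Fin n} {sa sb ty : Fin n → Bool} {s : Fin n}

lemma pairs (heval : ∀ i x, F x i = ev (ty i) (sa i) (sb i) (x (A i)) (x (B i)))
    (hne : ∀ i, A i ≠ B i)
    (obs2 : ∀ x y, x s = y s → F x = F y → x = y) {j : Fin n} (hj : j ≠ s) :
    ∃ p q k, p ≠ q ∧ touches A B p j ∧ touches A B q j ∧
      otherOf A B p j = k ∧ otherOf A B q j = k := by
  by_contra hno
  push_neg at hno
  set z : Fin n → Bool := fun v =>
    decide (∃ i, touches A B i j ∧ otherOf A B i j = v ∧ dmd A sa sb ty i v = true) with hzdef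
  set x := Function.update z j false with hxdef
  set y := Function.update z j true with hydef
  have key : ∀ i, touches A B i j →
      z (otherOf A B i j) = dmd A sa sb ty i (otherOf A B i j) := by
    intro i hi
    by_cases hd : dmd A sa sb ty i (otherOf A B i j) = true
    · rw [hd, hzdef]
      rw [decide_eq_true_eq]
      exact ⟨i, hi, rfl, hd⟩
    · have hd' : dmd A sa sb ty i (otherOf A B i j) = false := by
        cases h : dmd A sa sb ty i (otherOf A B i j)
        · rfl
        · exact absurd h hd
      rw [hd', hzdef]
      rw [decide_eq_false_iff_not]
      rintro ⟨i', hi', ho', hd2⟩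
      by_cases hii : i' = i
      · subst hii; rw [ho'] at hd2; exact hd (hd2)
      · exact hno i' i (otherOf A B i j) hii hi' hi ho' rfl
  have hxy : F x = F y := by
    funext i
    by_cases hti : touches A B i j
    · have hvj : otherOf A B i j ≠ j := otherOf_ne (hne i) hti
      have h1 : x (otherOf A B i j) = dmd A sa sb ty i (otherOf A B i j) := by
        rw [hxdef, Function.update_of_ne hvj]; exact key i hti
      have h2 : y (otherOf A B i j) = dmd A sa sb ty i (otherOf A B i j) := by
        rw [hydef, Function.update_of_ne hvj]; exact key i hti
      rw [force heval i x _ (otherOf_touches _ _) h1,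
          force heval i y _ (otherOf_touches _ _) h2]
    · have hA : A i ≠ j := fun h => hti (Or.inl h)
      have hB : B i ≠ j := fun h => hti (Or.inr h)
      exact evalDepends heval i
        (by rw [hxdef, hydef, Function.update_of_ne hA, Function.update_of_ne hA])
        (by rw [hxdef, hydef, Function.update_of_ne hB, Function.update_of_ne hB])
  have hxy2 := obs2 x y
    (by rw [hxdef, hydef, Function.update_of_ne (Ne.symm hj), Function.update_of_ne (Ne.symm hj)])
    hxy
  have : x j = y j := congrFun hxy2 j
  rw [hxdef, hydef, Function.update_self, Function.update_self] at this
  exact Bool.false_ne_true this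

lemma CA (heval : ∀ i x, F x i = ev (ty i) (sa i) (sb i) (x (A i)) (x (B i)))
    (hne : ∀ i, A i ≠ B i)
    (obs2 : ∀ x y, x s = y s → F x = F y → x = y) {a b p q : Fin n}
    (hab : a ≠ b) (hsa : s ≠ a) (hsb : s ≠ b) (_hpq : p ≠ q)
    (hpt : touches A B p a) (hpo : otherOf A B p a = b)
    (hqt : touches A B q a) (hqo : otherOf A B q a = b)
    (z : Fin n → Bool)
    (hz : ∀ i, i ≠ p → i ≠ q → touches A B i a ∨ touches A B i b →
      ∃ m, m ≠ a ∧ m ≠ b ∧ touches A B i m ∧ z m = dmd A sa sb ty i m) : False := by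
  obtain ⟨t1, e1, e2, hP⟩ := norm heval hne hpt hpo
  obtain ⟨t2, f1, f2, hQ⟩ := norm heval hne hqt hqo
  obtain ⟨u, v, u', v', hneq, h1, h2⟩ := PA t1 e1 e2 t2 f1 f2
  set x : Fin n → Bool := (fun w => if w = a then u else if w = b then v else z w) with hxdef
  set y : Fin n → Bool := (fun w => if w = a then u' else if w = b then v' else z w) with hydef
  have hxa : x a = u := by rw [hxdef]; simp
  have hya : y a = u' := by rw [hydef]; simp
  have hxb : x b = v := by rw [hxdef]; simp [Ne.symm hab]
  have hyb : y b = v' := by rw [hydef]; simp [Ne.symm hab]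
  have hxw : ∀ w, w ≠ a → w ≠ b → x w = z w := by
    intro w h1' h2'; rw [hxdef]; simp [h1', h2']
  have hyw : ∀ w, w ≠ a → w ≠ b → y w = z w := by
    intro w h1' h2'; rw [hydef]; simp [h1', h2']
  have hxy : F x = F y := by
    funext i
    by_cases hip : i = p
    · subst hip; rw [hP, hP, hxa, hxb, hya, hyb]; exact h1
    by_cases hiq : i = q
    · subst hiq; rw [hQ, hQ, hxa, hxb, hya, hyb]; exact h2
    by_cases hit : touches A B i a ∨ touches A B i b
    · obtain ⟨m, hma, hmb, htm, hzm⟩ := hz i hip hiq hit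
      have hx' : x m = dmd A sa sb ty i m := by rw [hxw m hma hmb]; exact hzm
      have hy' : y m = dmd A sa sb ty i m := by rw [hyw m hma hmb]; exact hzm
      rw [force heval i x m htm hx', force heval i y m htm hy']
    · have hA1 : A i ≠ a := fun h => hit (Or.inl (Or.inl h))
      have hB1 : B i ≠ a := fun h => hit (Or.inl (Or.inr h))
      have hA2 : A i ≠ b := fun h => hit (Or.inr (Or.inl h))
      have hB2 : B i ≠ b := fun h => hit (Or.inr (Or.inr h))
      exact evalDepends heval i
        (by rw [hxw _ hA1 hA2, hyw _ hA1 hA2]) (by rw [hxw _ hB1 hB2, hyw _ hB1 hB2])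
  have hxeqy := obs2 x y (by rw [hxw s hsa hsb, hyw s hsa hsb]) hxy
  apply hneq
  constructor
  · rw [← hxa, ← hya, hxeqy]
  · rw [← hxb, ← hyb, hxeqy]

lemma CB (heval : ∀ i x, F x i = ev (ty i) (sa i) (sb i) (x (A i)) (x (B i)))
    (hne : ∀ i, A i ≠ B i)
    (obs2 : ∀ x y, x s = y s → F x = F y → x = y) {a b c p q r t : Fin n}
    (hab : a ≠ b) (hac : a ≠ c) (hbc : b ≠ c) (hsa : s ≠ a) (hsb : s ≠ b) (hsc : s ≠ c)
    (hpt : touches A B p a) (hpo : otherOf A B p a = b)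
    (hqt : touches A B q a) (hqo : otherOf A B q a = b)
    (hrt : touches A B r b) (hro : otherOf A B r b = c)
    (htt : touches A B t b) (hto : otherOf A B t b = c)
    (hall : ∀ i : Fin n, i = p ∨ i = q ∨ i = r ∨ i = t) : False := by
  obtain ⟨t1, e1, e2, hP⟩ := norm heval hne hpt hpo
  obtain ⟨t2, f1, f2, hQ⟩ := norm heval hne hqt hqo
  obtain ⟨t3, g1, g2, hR⟩ := norm heval hne hrt hro
  obtain ⟨t4, k1, k2, hT⟩ := norm heval hne htt hto
  obtain ⟨u1, u2, u3, w1, w2, w3, hneq, h1, h2, h3, h4⟩ := PB t1 e1 e2 t2 f1 f2 t3 g1 g2 t4 k1 k2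
  set x : Fin n → Bool :=
    (fun w => if w = a then u1 else if w = b then u2 else if w = c then u3 else false) with hxdef
  set y : Fin n → Bool :=
    (fun w => if w = a then w1 else if w = b then w2 else if w = c then w3 else false) with hydef
  have hxa : x a = u1 := by rw [hxdef]; simp
  have hya : y a = w1 := by rw [hydef]; simp
  have hxb : x b = u2 := by rw [hxdef]; simp [Ne.symm hab]
  have hyb : y b = w2 := by rw [hydef]; simp [Ne.symm hab]
  have hxc : x c = u3 := by rw [hxdef]; simp [Ne.symm hac, Ne.symm hbc]
  have hyc : y c = w3 := by rw [hydef]; simp [Ne.symm hac, Ne.symm hbc]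
  have hxy : F x = F y := by
    funext i
    rcases hall i with hi | hi | hi | hi <;> subst hi
    · rw [hP, hP, hxa, hxb, hya, hyb]; exact h1
    · rw [hQ, hQ, hxa, hxb, hya, hyb]; exact h2
    · rw [hR, hR, hxb, hxc, hyb, hyc]; exact h3
    · rw [hT, hT, hxb, hxc, hyb, hyc]; exact h4
  have hxeqy := obs2 x y
    (by rw [hxdef, hydef]; simp [hsa, hsb, hsc]) hxy
  apply hneq
  refine ⟨?_, ?_, ?_⟩
  · rw [← hxa, ← hya, hxeqy]
  · rw [← hxb, ← hyb, hxeqy]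
  · rw [← hxc, ← hyc, hxeqy]

end BN2

section BN3

variable {n : ℕ} {A B : Fin n → Fin n}

lemma deg_sum (hne : ∀ i, A i ≠ B i) : ∑ v, deg A B v = 2 * n := by
  unfold deg
  have h1 : ∀ v : Fin n, (Finset.univ.filter fun i => touches A B i v).card
      = ∑ i : Fin n, if touches A B i v then 1 else 0 := fun v => Finset.card_filter _ _
  calc ∑ v, (Finset.univ.filter fun i => touches A B i v).card
      = ∑ v : Fin n, ∑ i : Fin n, if touches A B i v then 1 else 0 := by
        exact Finset.sum_congr rfl fun v _ => h1 v
    _ = ∑ i : Fin n, ∑ v : Fin n, if touches A B i v then 1 else 0 := Finset.sum_comm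
    _ = ∑ _i : Fin n, 2 := by
        refine Finset.sum_congr rfl fun i _ => ?_
        rw [← Finset.card_filter]
        have : (Finset.univ.filter fun v => touches A B i v) = {A i, B i} := by
          ext v
          simp [touches, eq_comm, or_comm]
        rw [this, Finset.card_insert_of_notMem (by simp [hne i]), Finset.card_singleton]
    _ = 2 * n := by simp [Finset.card_univ, mul_comm]

lemma two_le_deg {p q v : Fin n} (hpq : p ≠ q) (hp : touches A B p v)
    (hq : touches A B q v) : 2 ≤ deg A B v := by
  have hsub : ({p, q} : Finset (Fin n)) ⊆ Finset.univ.filter (fun i => touches A B i v) := by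
    intro i hi
    rcases Finset.mem_insert.mp hi with h | h
    · subst h; simp [hp]
    · rw [Finset.mem_singleton] at h; subst h; simp [hq]
  calc 2 = ({p, q} : Finset (Fin n)).card := (Finset.card_pair hpq).symm
    _ ≤ _ := Finset.card_le_card hsub

lemma four_le_deg {i1 i2 i3 i4 v : Fin n} (h12 : i1 ≠ i2) (h13 : i1 ≠ i3) (h14 : i1 ≠ i4)
    (h23 : i2 ≠ i3) (h24 : i2 ≠ i4) (h34 : i3 ≠ i4)
    (h1 : touches A B i1 v) (h2 : touches A B i2 v) (h3 : touches A B i3 v)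
    (h4 : touches A B i4 v) : 4 ≤ deg A B v := by
  have hsub : ({i1, i2, i3, i4} : Finset (Fin n)) ⊆
      Finset.univ.filter (fun i => touches A B i v) := by
    intro i hi
    simp only [Finset.mem_insert, Finset.mem_singleton] at hi
    rcases hi with h | h | h | h <;> subst h <;> simp [h1, h2, h3, h4]
  have hcard : ({i1, i2, i3, i4} : Finset (Fin n)).card = 4 := by
    rw [Finset.card_insert_of_notMem (by simp [h12, h13, h14]),
      Finset.card_insert_of_notMem (by simp [h23, h24]), Finset.card_pair h34]
  calc 4 = ({i1, i2, i3, i4} : Finset (Fin n)).card := hcard.symm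
    _ ≤ _ := Finset.card_le_card hsub

lemma six_le_deg {i1 i2 i3 i4 i5 i6 v : Fin n}
    (h12 : i1 ≠ i2) (h13 : i1 ≠ i3) (h14 : i1 ≠ i4) (h15 : i1 ≠ i5) (h16 : i1 ≠ i6)
    (h23 : i2 ≠ i3) (h24 : i2 ≠ i4) (h25 : i2 ≠ i5) (h26 : i2 ≠ i6)
    (h34 : i3 ≠ i4) (h35 : i3 ≠ i5) (h36 : i3 ≠ i6)
    (h45 : i4 ≠ i5) (h46 : i4 ≠ i6) (h56 : i5 ≠ i6)
    (h1 : touches A B i1 v) (h2 : touches A B i2 v) (h3 : touches A B i3 v)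
    (h4 : touches A B i4 v) (h5 : touches A B i5 v) (h6 : touches A B i6 v) :
    6 ≤ deg A B v := by
  have hsub : ({i1, i2, i3, i4, i5, i6} : Finset (Fin n)) ⊆
      Finset.univ.filter (fun i => touches A B i v) := by
    intro i hi
    simp only [Finset.mem_insert, Finset.mem_singleton] at hi
    rcases hi with h | h | h | h | h | h <;> subst h <;> simp [h1, h2, h3, h4, h5, h6]
  have hcard : ({i1, i2, i3, i4, i5, i6} : Finset (Fin n)).card = 6 := by
    rw [Finset.card_insert_of_notMem (by simp [h12, h13, h14, h15, h16]),
      Finset.card_insert_of_notMem (by simp [h23, h24, h25, h26]),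
      Finset.card_insert_of_notMem (by simp [h34, h35, h36]),
      Finset.card_insert_of_notMem (by simp [h45, h46]), Finset.card_pair h56]
  calc 6 = ({i1, i2, i3, i4, i5, i6} : Finset (Fin n)).card := hcard.symm
    _ ≤ _ := Finset.card_le_card hsub

lemma only_two {p q v : Fin n} (hpq : p ≠ q) (hp : touches A B p v)
    (hq : touches A B q v) (hd : deg A B v ≤ 2) :
    ∀ i, touches A B i v → i = p ∨ i = q := by
  have hsub : ({p, q} : Finset (Fin n)) ⊆ Finset.univ.filter (fun i => touches A B i v) := by
    intro i hi
    rcases Finset.mem_insert.mp hi with h | h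
    · subst h; simp [hp]
    · rw [Finset.mem_singleton] at h; subst h; simp [hq]
  have heq := Finset.eq_of_subset_of_card_le hsub (by rw [Finset.card_pair hpq]; exact hd)
  intro i hi
  have : i ∈ ({p, q} : Finset (Fin n)) := by rw [heq]; simp [hi]
  simpa using this

end BN3

lemma sum_ge_mul {α : Type*} {s : Finset α} {f : α → ℕ} {c : ℕ}
    (hb : ∀ x ∈ s, c ≤ f x) : c * s.card ≤ ∑ x ∈ s, f x := by
  calc c * s.card = s.card • c := by rw [smul_eq_mul, mul_comm]
    _ ≤ ∑ x ∈ s, f x := Finset.card_nsmul_le_sum s f c hb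

lemma master {n : ℕ} (hn : 3 < n) {F : (Fin n → Bool) → (Fin n → Bool)}
    {A B : Fin n → Fin n} {sa sb ty : Fin n → Bool} {s : Fin n}
    (hne : ∀ i, A i ≠ B i)
    (heval : ∀ i x, F x i = ev (ty i) (sa i) (sb i) (x (A i)) (x (B i)))
    (obs2 : ∀ x y, x s = y s → F x = F y → x = y) : False := by
  classical
  set J : Finset (Fin n) := Finset.univ.erase s with hJ
  have hJcard : J.card = n - 1 := by
    rw [hJ, Finset.card_erase_of_mem (Finset.mem_univ s), Finset.card_univ, Fintype.card_fin]
  have hmemJ : ∀ j, j ∈ J ↔ j ≠ s := fun j => by simp [hJ]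
  choose c1 c2 kk hc12 ht1 ht2 ho1 ho2 using
    fun (j : Fin n) (hj : j ≠ s) => pairs heval hne obs2 hj
  have htk1 : ∀ j hj, touches A B (c1 j hj) (kk j hj) := fun j hj => by
    rw [← ho1 j hj]; exact otherOf_touches _ _
  have htk2 : ∀ j hj, touches A B (c2 j hj) (kk j hj) := fun j hj => by
    rw [← ho2 j hj]; exact otherOf_touches _ _
  have hkj : ∀ j hj, kk j hj ≠ j := fun j hj => by
    rw [← ho1 j hj]; exact otherOf_ne (hne _) (ht1 j hj)
  have hoth1 : ∀ j hj, otherOf A B (c1 j hj) (kk j hj) = j := fun j hj => by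
    rw [← ho1 j hj]; exact otherOf_other (hne _) (ht1 j hj)
  have hoth2 : ∀ j hj, otherOf A B (c2 j hj) (kk j hj) = j := fun j hj => by
    rw [← ho2 j hj]; exact otherOf_other (hne _) (ht2 j hj)
  have hdeg2 : ∀ j, j ≠ s → 2 ≤ deg A B j := fun j hj =>
    two_le_deg (hc12 j hj) (ht1 j hj) (ht2 j hj)
  have hsum : deg A B s + ∑ j ∈ J, deg A B j = 2 * n := by
    rw [hJ, Finset.add_sum_erase _ _ (Finset.mem_univ s)]
    exact deg_sum hne
  have hJge : 2 * J.card ≤ ∑ j ∈ J, deg A B j :=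
    sum_ge_mul (fun x hx => hdeg2 x ((hmemJ x).mp hx))
  by_cases hgood : ∃ j, ∃ hj : j ≠ s, deg A B j = 2 ∧ kk j hj ≠ s ∧ deg A B (kk j hj) ≤ 3
  · -- Case 1 : an isolated-enough pair, use CA
    obtain ⟨a, ha, hda, hkbs, hdb⟩ := hgood
    have hab : a ≠ kk a ha := (hkj a ha).symm
    have honly := only_two (hc12 a ha) (ht1 a ha) (ht2 a ha) (le_of_eq hda)
    have hptb : touches A B (c1 a ha) (kk a ha) := htk1 a ha
    have hqtb : touches A B (c2 a ha) (kk a ha) := htk2 a ha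
    have htob : ∀ i, i ≠ c1 a ha → i ≠ c2 a ha →
        (touches A B i a ∨ touches A B i (kk a ha)) → touches A B i (kk a ha) := by
      intro i hip hiq hit
      rcases hit with h | h
      · rcases honly i h with h' | h'
        · exact absurd h' hip
        · exact absurd h' hiq
      · exact h
    have huniq : ∀ i i', i ≠ c1 a ha → i ≠ c2 a ha → touches A B i (kk a ha) →
        i' ≠ c1 a ha → i' ≠ c2 a ha → touches A B i' (kk a ha) → i = i' := by
      intro i i' hip hiq hib hi'p hi'q hi'b
      by_contra hii
      have h4 := four_le_deg (hc12 a ha) (Ne.symm hip) (Ne.symm hi'p) (Ne.symm hiq)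
        (Ne.symm hi'q) hii hptb hqtb hib hi'b
      omega
    by_cases hex : ∃ i, i ≠ c1 a ha ∧ i ≠ c2 a ha ∧
        (touches A B i a ∨ touches A B i (kk a ha))
    · obtain ⟨i0, h0p, h0q, h0t⟩ := hex
      have h0b : touches A B i0 (kk a ha) := htob i0 h0p h0q h0t
      have hm0b : otherOf A B i0 (kk a ha) ≠ kk a ha := otherOf_ne (hne _) h0b
      have hm0t : touches A B i0 (otherOf A B i0 (kk a ha)) := otherOf_touches _ _
      have hm0a : otherOf A B i0 (kk a ha) ≠ a := by
        intro h
        rcases honly i0 (h ▸ hm0t) with h' | h'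
        · exact h0p h'
        · exact h0q h'
      refine CA heval hne obs2 hab (Ne.symm ha) (Ne.symm hkbs) (hc12 a ha)
        (ht1 a ha) (ho1 a ha) (ht2 a ha) (ho2 a ha)
        (Function.update (fun _ => false) (otherOf A B i0 (kk a ha))
          (dmd A sa sb ty i0 (otherOf A B i0 (kk a ha)))) ?_
      intro i hip hiq hit
      have hi0 : i = i0 := huniq i i0 hip hiq (htob i hip hiq hit) h0p h0q h0b
      subst hi0
      exact ⟨otherOf A B i (kk a ha), hm0a, hm0b, hm0t, Function.update_self _ _ _⟩
    · refine CA heval hne obs2 hab (Ne.symm ha) (Ne.symm hkbs) (hc12 a ha)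
        (ht1 a ha) (ho1 a ha) (ht2 a ha) (ho2 a ha) (fun _ => false) ?_
      intro i hip hiq hit
      exact absurd ⟨i, hip, hiq, hit⟩ hex
  · -- Case 2
    push_neg at hgood
    by_cases hks : ∃ j, ∃ hj : j ≠ s, kk j hj = s
    · obtain ⟨j0, hj0, hk0⟩ := hks
      have hts1 : touches A B (c1 j0 hj0) s := hk0 ▸ htk1 j0 hj0
      have hts2 : touches A B (c2 j0 hj0) s := hk0 ▸ htk2 j0 hj0
      have hds : 2 ≤ deg A B s := two_le_deg (hc12 j0 hj0) hts1 hts2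
      have hall2 : ∀ j, j ≠ s → deg A B j = 2 := by
        intro j hj
        by_contra hne2
        have h3 : 3 ≤ deg A B j := by have := hdeg2 j hj; omega
        have hjJ : j ∈ J := (hmemJ j).mpr hj
        have hsplit : deg A B j + ∑ x ∈ J.erase j, deg A B x = ∑ x ∈ J, deg A B x :=
          Finset.add_sum_erase _ _ hjJ
        have hge : 2 * (J.erase j).card ≤ ∑ x ∈ J.erase j, deg A B x :=
          sum_ge_mul (fun x hx => hdeg2 x ((hmemJ x).mp (Finset.mem_of_mem_erase hx)))
        have hc : (J.erase j).card = n - 1 - 1 := by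
          rw [Finset.card_erase_of_mem hjJ, hJcard]
        omega
      have hcard2 : 0 < (J.erase j0).card := by
        rw [Finset.card_erase_of_mem ((hmemJ j0).mpr hj0), hJcard]; omega
      obtain ⟨j1, hj1mem⟩ := Finset.card_pos.mp hcard2
      have hj1j0 : j1 ≠ j0 := (Finset.mem_erase.mp hj1mem).1
      have hj1 : j1 ≠ s := (hmemJ j1).mp (Finset.mem_of_mem_erase hj1mem)
      rcases eq_or_ne (kk j1 hj1) s with hk1 | hk1
      · have hts1' : touches A B (c1 j1 hj1) s := hk1 ▸ htk1 j1 hj1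
        have hts2' : touches A B (c2 j1 hj1) s := hk1 ▸ htk2 j1 hj1
        have hd1 : c1 j0 hj0 ≠ c1 j1 hj1 := by
          intro h
          have hx := ht1 j1 hj1; rw [← h] at hx
          exact touches3 (ht1 j0 hj0) hx hts1 (Ne.symm hj1j0) hj0 hj1
        have hd2 : c1 j0 hj0 ≠ c2 j1 hj1 := by
          intro h
          have hx := ht2 j1 hj1; rw [← h] at hx
          exact touches3 (ht1 j0 hj0) hx hts1 (Ne.symm hj1j0) hj0 hj1
        have hd3 : c2 j0 hj0 ≠ c1 j1 hj1 := by
          intro h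
          have hx := ht1 j1 hj1; rw [← h] at hx
          exact touches3 (ht2 j0 hj0) hx hts2 (Ne.symm hj1j0) hj0 hj1
        have hd4 : c2 j0 hj0 ≠ c2 j1 hj1 := by
          intro h
          have hx := ht2 j1 hj1; rw [← h] at hx
          exact touches3 (ht2 j0 hj0) hx hts2 (Ne.symm hj1j0) hj0 hj1
        have h4 := four_le_deg (hc12 j0 hj0) hd1 hd2 hd3 hd4 (hc12 j1 hj1)
          hts1 hts2 hts1' hts2'
        omega
      · have hlt := hgood j1 hj1 (hall2 j1 hj1) hk1
        have := hall2 (kk j1 hj1) hk1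
        omega
    · push_neg at hks
      by_cases h3all : ∀ j, j ≠ s → 3 ≤ deg A B j
      · have hge : 3 * J.card ≤ ∑ x ∈ J, deg A B x :=
          sum_ge_mul (fun x hx => h3all x ((hmemJ x).mp hx))
        omega
      · push_neg at h3all
        obtain ⟨js, hjs, hltjs⟩ := h3all
        have hdjs : deg A B js = 2 := by have := hdeg2 js hjs; omega
        have hws : kk js hjs ≠ s := hks js hjs
        have hw4 : 3 < deg A B (kk js hjs) := hgood js hjs hdjs hws
        set w := kk js hjs with hwdef
        have hwJ : w ∈ J := (hmemJ w).mpr hws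
        have hall2' : ∀ j, j ≠ s → j ≠ w → deg A B j = 2 := by
          intro j hj hjw
          by_contra hne2
          have h3 : 3 ≤ deg A B j := by have := hdeg2 j hj; omega
          have hjJ' : j ∈ J.erase w := Finset.mem_erase.mpr ⟨hjw, (hmemJ j).mpr hj⟩
          have hs1 : deg A B w + ∑ x ∈ J.erase w, deg A B x = ∑ x ∈ J, deg A B x :=
            Finset.add_sum_erase _ _ hwJ
          have hs2 : deg A B j + ∑ x ∈ (J.erase w).erase j, deg A B x
              = ∑ x ∈ J.erase w, deg A B x := Finset.add_sum_erase _ _ hjJ'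
          have hge2 : 2 * ((J.erase w).erase j).card
              ≤ ∑ x ∈ (J.erase w).erase j, deg A B x :=
            sum_ge_mul (fun x hx => hdeg2 x ((hmemJ x).mp
              (Finset.mem_of_mem_erase (Finset.mem_of_mem_erase hx))))
          have hcc : ((J.erase w).erase j).card = n - 1 - 1 - 1 := by
            rw [Finset.card_erase_of_mem hjJ', Finset.card_erase_of_mem hwJ, hJcard]
          omega
        have hkw : ∀ j (hj : j ≠ s), j ≠ w → kk j hj = w := by
          intro j hj hjw
          by_contra hkjw
          have h4 := hgood j hj (hall2' j hj hjw) (hks j hj)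
          have := hall2' (kk j hj) (hks j hj) hkjw
          omega
        have hcross : ∀ {x y : Fin n} {ja jb : Fin n}, touches A B x ja → touches A B y jb →
            touches A B x w → ja ≠ jb → ja ≠ w → jb ≠ w → x ≠ y := by
          intro x y ja jb hx hy hxw hab' haw hbw he
          exact touches3 hx (he ▸ hy) hxw hab' haw hbw
        by_cases hn5 : 5 ≤ n
        · have hge3 : 3 ≤ (J.erase w).card := by
            rw [Finset.card_erase_of_mem hwJ, hJcard]; omega
          obtain ⟨j2, hj2m⟩ := Finset.card_pos.mp (by omega : 0 < (J.erase w).card)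
          have hj2w : j2 ≠ w := (Finset.mem_erase.mp hj2m).1
          have hj2 : j2 ≠ s := (hmemJ j2).mp (Finset.mem_of_mem_erase hj2m)
          obtain ⟨j3, hj3m, j4, hj4m, h34⟩ := Finset.one_lt_card.mp
            (show 1 < ((J.erase w).erase j2).card by
              rw [Finset.card_erase_of_mem hj2m, Finset.card_erase_of_mem hwJ, hJcard]; omega)
          have hj32 : j3 ≠ j2 := (Finset.mem_erase.mp hj3m).1
          have hj3w : j3 ≠ w := (Finset.mem_erase.mp (Finset.mem_of_mem_erase hj3m)).1
          have hj3 : j3 ≠ s := (hmemJ j3).mp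
            (Finset.mem_of_mem_erase (Finset.mem_of_mem_erase hj3m))
          have hj42 : j4 ≠ j2 := (Finset.mem_erase.mp hj4m).1
          have hj4w : j4 ≠ w := (Finset.mem_erase.mp (Finset.mem_of_mem_erase hj4m)).1
          have hj4 : j4 ≠ s := (hmemJ j4).mp
            (Finset.mem_of_mem_erase (Finset.mem_of_mem_erase hj4m))
          have hw2 : touches A B (c1 j2 hj2) w := by rw [← hkw j2 hj2 hj2w]; exact htk1 j2 hj2
          have hw2' : touches A B (c2 j2 hj2) w := by rw [← hkw j2 hj2 hj2w]; exact htk2 j2 hj2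
          have hw3 : touches A B (c1 j3 hj3) w := by rw [← hkw j3 hj3 hj3w]; exact htk1 j3 hj3
          have hw3' : touches A B (c2 j3 hj3) w := by rw [← hkw j3 hj3 hj3w]; exact htk2 j3 hj3
          have hw4' : touches A B (c1 j4 hj4) w := by rw [← hkw j4 hj4 hj4w]; exact htk1 j4 hj4
          have hw4'' : touches A B (c2 j4 hj4) w := by rw [← hkw j4 hj4 hj4w]; exact htk2 j4 hj4
          have h6 := six_le_deg (hc12 j2 hj2)
            (hcross (ht1 j2 hj2) (ht1 j3 hj3) hw2 (Ne.symm hj32) hj2w hj3w)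
            (hcross (ht1 j2 hj2) (ht2 j3 hj3) hw2 (Ne.symm hj32) hj2w hj3w)
            (hcross (ht1 j2 hj2) (ht1 j4 hj4) hw2 (Ne.symm hj42) hj2w hj4w)
            (hcross (ht1 j2 hj2) (ht2 j4 hj4) hw2 (Ne.symm hj42) hj2w hj4w)
            (hcross (ht2 j2 hj2) (ht1 j3 hj3) hw2' (Ne.symm hj32) hj2w hj3w)
            (hcross (ht2 j2 hj2) (ht2 j3 hj3) hw2' (Ne.symm hj32) hj2w hj3w)
            (hcross (ht2 j2 hj2) (ht1 j4 hj4) hw2' (Ne.symm hj42) hj2w hj4w)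
            (hcross (ht2 j2 hj2) (ht2 j4 hj4) hw2' (Ne.symm hj42) hj2w hj4w)
            (hc12 j3 hj3)
            (hcross (ht1 j3 hj3) (ht1 j4 hj4) hw3 h34 hj3w hj4w)
            (hcross (ht1 j3 hj3) (ht2 j4 hj4) hw3 h34 hj3w hj4w)
            (hcross (ht2 j3 hj3) (ht1 j4 hj4) hw3' h34 hj3w hj4w)
            (hcross (ht2 j3 hj3) (ht2 j4 hj4) hw3' h34 hj3w hj4w)
            (hc12 j4 hj4)
            hw2 hw2' hw3 hw3' hw4' hw4''
          have hs1 : deg A B w + ∑ x ∈ J.erase w, deg A B x = ∑ x ∈ J, deg A B x :=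
            Finset.add_sum_erase _ _ hwJ
          have hge2 : 2 * (J.erase w).card ≤ ∑ x ∈ J.erase w, deg A B x :=
            sum_ge_mul (fun x hx => hdeg2 x ((hmemJ x).mp (Finset.mem_of_mem_erase hx)))
          have hcc : (J.erase w).card = n - 1 - 1 := by
            rw [Finset.card_erase_of_mem hwJ, hJcard]
          omega
        · have hn4 : n = 4 := by omega
          have hcc : (J.erase w).card = 2 := by
            rw [Finset.card_erase_of_mem hwJ, hJcard]; omega
          obtain ⟨j2, hj2m, j3, hj3m, hj23⟩ := Finset.one_lt_card.mp
            (by rw [hcc]; omega : 1 < (J.erase w).card)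
          have hj2w : j2 ≠ w := (Finset.mem_erase.mp hj2m).1
          have hj2 : j2 ≠ s := (hmemJ j2).mp (Finset.mem_of_mem_erase hj2m)
          have hj3w : j3 ≠ w := (Finset.mem_erase.mp hj3m).1
          have hj3 : j3 ≠ s := (hmemJ j3).mp (Finset.mem_of_mem_erase hj3m)
          have hpo : otherOf A B (c1 j2 hj2) j2 = w := by
            rw [ho1 j2 hj2, hkw j2 hj2 hj2w]
          have hqo : otherOf A B (c2 j2 hj2) j2 = w := by
            rw [ho2 j2 hj2, hkw j2 hj2 hj2w]
          have hrtw : touches A B (c1 j3 hj3) w := by rw [← hkw j3 hj3 hj3w]; exact htk1 j3 hj3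
          have httw : touches A B (c2 j3 hj3) w := by rw [← hkw j3 hj3 hj3w]; exact htk2 j3 hj3
          have hrow : otherOf A B (c1 j3 hj3) w = j3 := by
            have := hoth1 j3 hj3; rw [hkw j3 hj3 hj3w] at this; exact this
          have htow : otherOf A B (c2 j3 hj3) w = j3 := by
            have := hoth2 j3 hj3; rw [hkw j3 hj3 hj3w] at this; exact this
          have hw2 : touches A B (c1 j2 hj2) w := by rw [← hkw j2 hj2 hj2w]; exact htk1 j2 hj2
          have hw2' : touches A B (c2 j2 hj2) w := by rw [← hkw j2 hj2 hj2w]; exact htk2 j2 hj2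
          have hpr : c1 j2 hj2 ≠ c1 j3 hj3 :=
            hcross (ht1 j2 hj2) (ht1 j3 hj3) hw2 hj23 hj2w hj3w
          have hpt' : c1 j2 hj2 ≠ c2 j3 hj3 :=
            hcross (ht1 j2 hj2) (ht2 j3 hj3) hw2 hj23 hj2w hj3w
          have hqr : c2 j2 hj2 ≠ c1 j3 hj3 :=
            hcross (ht2 j2 hj2) (ht1 j3 hj3) hw2' hj23 hj2w hj3w
          have hqt' : c2 j2 hj2 ≠ c2 j3 hj3 :=
            hcross (ht2 j2 hj2) (ht2 j3 hj3) hw2' hj23 hj2w hj3w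
          have hcard4 : ({c1 j2 hj2, c2 j2 hj2, c1 j3 hj3, c2 j3 hj3} : Finset (Fin n)).card
              = 4 := by
            rw [Finset.card_insert_of_notMem (by simp [hc12 j2 hj2, hpr, hpt']),
              Finset.card_insert_of_notMem (by simp [hqr, hqt']),
              Finset.card_pair (hc12 j3 hj3)]
          have huniv : ∀ i : Fin n, i = c1 j2 hj2 ∨ i = c2 j2 hj2 ∨ i = c1 j3 hj3 ∨
              i = c2 j3 hj3 := by
            intro i
            have hsub : ({c1 j2 hj2, c2 j2 hj2, c1 j3 hj3, c2 j3 hj3} : Finset (Fin n))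
                = Finset.univ := by
              apply Finset.eq_of_subset_of_card_le (Finset.subset_univ _)
              rw [Finset.card_univ, Fintype.card_fin, hcard4, hn4]
            have : i ∈ ({c1 j2 hj2, c2 j2 hj2, c1 j3 hj3, c2 j3 hj3} : Finset (Fin n)) := by
              rw [hsub]; exact Finset.mem_univ i
            simpa using this
          exact CB heval hne obs2 hj2w hj23 (fun h => hj3w h.symm) (Ne.symm hj2)
            (Ne.symm hws) (Ne.symm hj3) (ht1 j2 hj2) hpo (ht2 j2 hj2) hqo
            hrtw hrow httw htow huniv

theorem no_single_observation_two_and_or (n : ℕ) (hn : 3 < n)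
    (F : (Fin n → Bool) → (Fin n → Bool)) (hF : isAndOrBN 2 F)
    (S : Finset (Fin n)) (hS : S.card = 1) :
    ¬ observable F S := by
  intro hobs
  obtain ⟨s, rfl⟩ := Finset.card_eq_one.mp hS
  have obs2 : ∀ x y : Fin n → Bool, x s = y s → F x = F y → x = y := by
    intro x y h0 h1
    apply hobs
    funext t i
    obtain ⟨i, hi⟩ := i
    have his : i = s := Finset.mem_singleton.mp hi
    subst his
    cases t with
    | zero => simpa using h0
    | succ t => simp only [Function.iterate_succ_apply, h1]
  have hF' : ∀ i, ∃ a : Fin n, ∃ b' : Fin n, ∃ p q' t' : Bool,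
      a ≠ b' ∧ ∀ x, F x i = ev t' p q' (x a) (x b') := by
    intro i
    obtain ⟨idx, hinj, bb, hc⟩ := hF i
    have h01 : idx 0 ≠ idx 1 := fun h => absurd (hinj h) (by decide)
    have huniv2 : (Finset.univ : Finset (Fin 2)) = {0, 1} := by decide
    rcases hc with h | h
    · refine ⟨idx 0, idx 1, bb 0, bb 1, true, h01, fun x => ?_⟩
      rw [h x, huniv2, Finset.inf_insert, Finset.inf_singleton, bool_inf]
      rfl
    · refine ⟨idx 0, idx 1, bb 0, bb 1, false, h01, fun x => ?_⟩
      rw [h x, huniv2, Finset.sup_insert, Finset.sup_singleton, bool_sup]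
      rfl
  choose A B sa sb ty hne heval using hF'
  exact master hn hne heval obs2
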